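/- For every assignment of states (occupied or vacant) to the squares of Λ = {1,…,m} × {1,…,n}, if Λ contains no occupied plus connected left-right crossing, then Λ contains a vacant star connected top-down crossing. -/

import Mathlib

/-- Star adjacency on squares of the array: share at least a corner. -/
def starAdj (i j : ℤ × ℤ) : Prop := max |i.1 - j.1| |i.2 - j.2| = 1

/-- Plus adjacency on squares of the array: share an edge. -/
def plusAdj (i j : ℤ × ℤ) : Prop := |i.1 - j.1| + |i.2 - j.2| = 1

/-- Membership in the rectangular array `Λ = {1,…,m} × {1,…,n}`. -/
def inRect (m n : ℤ) (k : ℤ × ℤ) : Prop :=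
  1 ≤ k.1 ∧ k.1 ≤ m ∧ 1 ≤ k.2 ∧ k.2 ≤ n

/-- A left-right crossing of `Λ = {1,…,m} × {1,…,n}` with respect to the adjacency
`adj`: a sequence of pairwise distinct squares of `Λ` with consecutive squares
adjacent, whose first square is the unique one with first coordinate `1` and whose
last square is the unique one with first coordinate `m`. -/
def IsLRCrossing (adj : ℤ × ℤ → ℤ × ℤ → Prop) (m n : ℤ) (J : List (ℤ × ℤ)) : Prop :=
  J ≠ [] ∧ J.Nodup ∧ J.Chain' adj ∧ (∀ k ∈ J, inRect m n k) ∧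
  (∀ k ∈ J, (k.1 = 1 ↔ J.head? = some k)) ∧
  (∀ k ∈ J, (k.1 = m ↔ J.getLast? = some k))

/-- A top-down crossing of `Λ = {1,…,m} × {1,…,n}` with respect to the adjacency
`adj`: a sequence of pairwise distinct squares of `Λ` with consecutive squares
adjacent, whose first square is the unique one with second coordinate `n` and whose
last square is the unique one with second coordinate `1`. -/
def IsTDCrossing (adj : ℤ × ℤ → ℤ × ℤ → Prop) (m n : ℤ) (J : List (ℤ × ℤ)) : Prop :=
  J ≠ [] ∧ J.Nodup ∧ J.Chain' adj ∧ (∀ k ∈ J, inRect m n k) ∧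
  (∀ k ∈ J, (k.2 = n ↔ J.head? = some k)) ∧
  (∀ k ∈ J, (k.2 = 1 ↔ J.getLast? = some k))

set_option linter.unusedTactic false
set_option linter.unreachableTactic false
set_option maxHeartbeats 1000000

/-! ### Adjacency helpers -/

lemma starAdj_bound {i j : ℤ × ℤ} (h : starAdj i j) :
    i.1 - j.1 ≤ 1 ∧ j.1 - i.1 ≤ 1 ∧ i.2 - j.2 ≤ 1 ∧ j.2 - i.2 ≤ 1 := by
  unfold starAdj at h
  simp only [max_def, abs] at h
  split_ifs at h <;> omega

lemma plusAdj_bound {i j : ℤ × ℤ} (h : plusAdj i j) :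
    i.1 - j.1 ≤ 1 ∧ j.1 - i.1 ≤ 1 ∧ i.2 - j.2 ≤ 1 ∧ j.2 - i.2 ≤ 1 := by
  unfold plusAdj at h
  simp only [abs] at h
  omega

lemma plusAdj_symm {i j : ℤ × ℤ} (h : plusAdj i j) : plusAdj j i := by
  unfold plusAdj at h ⊢
  rw [abs_sub_comm, abs_sub_comm j.2]
  exact h

/-! ### List utilities -/

open List in
lemma getLast?_append_right' {α : Type*} {l l2 : List α} (h : l2 ≠ []) :
    (l ++ l2).getLast? = l2.getLast? := by
  rw [List.getLast?_append]
  cases h2 : l2.getLast? with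
  | none => exact absurd (List.getLast?_eq_none_iff.mp h2) h
  | some a => rfl

open List in
lemma head?_append_left' {α : Type*} {l l2 : List α} (h : l ≠ []) :
    (l ++ l2).head? = l.head? := by
  rw [List.head?_append]
  cases h2 : l.head? with
  | none => exact absurd (List.head?_eq_none_iff.mp h2) h
  | some a => rfl

lemma splice {α : Type*} (r : α → α → Prop) :
    ∀ (N : ℕ) (l : List α), l.length ≤ N → l ≠ [] → l.Chain' r →
    ∃ l', l' ≠ [] ∧ l'.Chain' r ∧ l'.Nodup ∧ l'.head? = l.head? ∧
      l'.getLast? = l.getLast? ∧ ∀ k ∈ l', k ∈ l := by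
  intro N
  induction N with
  | zero =>
    rintro (_ | ⟨a, t⟩) hl hne hch
    · exact absurd rfl hne
    · simp at hl
  | succ N ih =>
    rintro (_ | ⟨x, t⟩) hlen hne hch
    · exact absurd rfl hne
    by_cases hx : x ∈ t
    · obtain ⟨u, v, rfl⟩ := List.append_of_mem hx
      have hsuf : (x :: v) <:+ (x :: (u ++ x :: v)) := ⟨x :: u, by simp⟩
      obtain ⟨l', h1, h2, h3, h4, h5, h6⟩ :=
        ih (x :: v) (by simp at hlen ⊢; omega) (by simp) (hch.suffix hsuf)
      refine ⟨l', h1, h2, h3, by rw [h4]; simp, ?_, fun k hk => ?_⟩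
      · rw [h5]
        have he : (x :: (u ++ x :: v)) = (x :: u) ++ (x :: v) := by simp
        rw [he, getLast?_append_right' (by simp)]
      · have := h6 k hk; simp at this ⊢; tauto
    · cases t with
      | nil => exact ⟨[x], by simp, List.isChain_singleton _, by simp, rfl, rfl, by simp⟩
      | cons y t' =>
        obtain ⟨hr, hch'⟩ := List.isChain_cons_cons.mp hch
        obtain ⟨l', h1, h2, h3, h4, h5, h6⟩ :=
          ih (y :: t') (by simp at hlen ⊢; omega) (by simp) hch'
        refine ⟨x :: l', by simp, ?_, ?_, by simp, ?_, ?_⟩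
        · refine List.isChain_cons.mpr ⟨fun z hz => ?_, h2⟩
          rw [h4] at hz; simp at hz; subst hz; exact hr
        · exact List.nodup_cons.mpr ⟨fun hc => hx (h6 x hc), h3⟩
        · cases l' with
          | nil => exact absurd rfl h1
          | cons a l'' => rw [List.getLast?_cons_cons, h5, List.getLast?_cons_cons]
        · intro k hk; simp at hk ⊢
          rcases hk with rfl | hk
          · left; rfl
          · have := h6 k hk; simp at this; tauto

lemma chain_drop_eq {α : Type*} (s : α → α → Prop) :
    ∀ (l : List α), l.Chain' (fun u v => u = v ∨ s u v) → l.Nodup → l.Chain' s := by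
  intro l
  induction l with
  | nil => intro _ _; exact List.isChain_nil
  | cons x t ih =>
    intro hch hnd
    cases t with
    | nil => exact List.isChain_singleton _
    | cons y t' =>
      obtain ⟨hr, hch'⟩ := List.isChain_cons_cons.mp hch
      refine List.isChain_cons_cons.mpr ⟨?_, ih hch' hnd.of_cons⟩
      rcases hr with rfl | hs
      · exact absurd (by simp) (List.nodup_cons.mp hnd).1
      · exact hs

lemma extract (c : ℤ × ℤ → ℤ) (r : ℤ × ℤ → ℤ × ℤ → Prop)
    (hr : ∀ a b, r a b → c a - c b ≤ 1 ∧ c b - c a ≤ 1) (lo hi : ℤ) (hlh : lo ≤ hi) :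
    ∀ (N : ℕ) (l : List (ℤ × ℤ)), l.length ≤ N → l.Chain' r →
      ∀ x, l.head? = some x → hi ≤ c x → ∀ y, l.getLast? = some y → c y < lo →
      ∃ J, J <:+: l ∧ J ≠ [] ∧ J.Chain' r ∧ (∀ k ∈ J, lo ≤ c k ∧ c k ≤ hi) ∧
        (∀ k ∈ J, (c k = hi ↔ J.head? = some k)) ∧
        (∀ k ∈ J, (c k = lo ↔ J.getLast? = some k)) := by
  intro N
  induction N with
  | zero =>
    intro l hl hch x hx _ y hy _
    cases l
    · simp at hx
    · simp at hl
  | succ N ih =>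
    rintro (_ | ⟨x, t⟩) hlen hch x' hx hhix y hy hylo
    · simp at hx
    simp only [List.head?_cons, Option.some.injEq] at hx
    subst hx
    rcases lt_or_eq_of_le hhix with hxx | hxx
    · -- hi < c x : drop the head
      cases t with
      | nil => simp at hy; subst hy; omega
      | cons x'' t' =>
        obtain ⟨hr1, hch'⟩ := List.isChain_cons_cons.mp hch
        have hb := hr x x'' hr1
        obtain ⟨J, hJ1, hJ2, hJ3, hJ4, hJ5, hJ6⟩ :=
          ih (x'' :: t') (by simp at hlen ⊢; omega) hch' x'' rfl (by omega) y
            (by rw [← List.getLast?_cons_cons (a := x)]; exact hy) hylo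
        exact ⟨J, hJ1.trans (List.infix_cons (List.infix_refl _)), hJ2, hJ3, hJ4, hJ5, hJ6⟩
    · -- hi = c x
      rcases eq_or_lt_of_le hlh with hlo | hlo
      · refine ⟨[x], ⟨[], t, by simp⟩, by simp, List.isChain_singleton _, ?_, ?_, ?_⟩
        · intro k hk; simp at hk; subst hk; omega
        · intro k hk; simp at hk; subst hk; simp; omega
        · intro k hk; simp at hk; subst hk; simp; omega
      · have hp : ∀ k : ℤ × ℤ, (fun k => decide (lo < c k ∧ c k < hi)) k = true ↔
            (lo < c k ∧ c k < hi) := fun k => by simp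
        set p : ℤ × ℤ → Bool := fun k => decide (lo < c k ∧ c k < hi)
        set s := t.takeWhile p with hs
        have hrne : t.dropWhile p ≠ [] := by
          intro hre
          have hts : s ++ t.dropWhile p = t := List.takeWhile_append_dropWhile (p := p) (l := t)
          rw [hre, List.append_nil] at hts
          cases t with
          | nil => simp at hy; subst hy; omega
          | cons a t'' =>
            have hyy : y ∈ a :: t'' := by
              have h3 : y ∈ x :: a :: t'' := List.mem_of_getLast? hy
              rcases List.mem_cons.mp h3 with rfl | h2
              · omega
              · exact h2
            rw [← hts] at hyy
            have := (hp y).mp (List.mem_takeWhile_imp hyy)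
            omega
        obtain ⟨z, rest', hdw⟩ : ∃ z rest', t.dropWhile p = z :: rest' := by
          cases hre : t.dropWhile p with
          | nil => exact absurd hre hrne
          | cons a b => exact ⟨a, b, rfl⟩
        have hts : s ++ (z :: rest') = t := by
          rw [← hdw]; exact List.takeWhile_append_dropWhile (p := p) (l := t)
        have hznp : ¬ (lo < c z ∧ c z < hi) := by
          have h4 := List.head?_dropWhile_not p t
          rw [hdw] at h4
          simp only [List.head?_cons] at h4
          intro hc
          exact absurd ((hp z).mpr hc) (by simp [h4])
        obtain ⟨w, hw⟩ : ∃ w, (x :: s).getLast? = some w := by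
          cases hsl : (x :: s).getLast? with
          | none => simp at hsl
          | some a => exact ⟨a, rfl⟩
        have hwmem : w ∈ x :: s := List.mem_of_getLast? hw
        have hwb : lo < c w ∧ c w ≤ hi := by
          rcases List.mem_cons.mp hwmem with rfl | hws
          · omega
          · have := (hp _).mp (List.mem_takeWhile_imp (hs ▸ hws))
            omega
        have hlsplit : x :: t = (x :: s) ++ (z :: rest') := by
          rw [← hts]; simp
        have hchsplit := hlsplit ▸ hch
        obtain ⟨hch1, hch2, hchj⟩ := List.isChain_append.mp hchsplit
        have hrwz : r w z := hchj w hw z rfl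
        have hwzb := hr w z hrwz
        rcases (by omega : c z ≤ lo ∨ hi ≤ c z) with hzlo | hzhi
        · -- c z = lo : take J = x :: s ++ [z]
          have hczlo : c z = lo := by omega
          refine ⟨x :: (s ++ [z]), ?_, by simp, ?_, ?_, ?_, ?_⟩
          · exact List.IsPrefix.isInfix ⟨rest', by rw [hlsplit]; simp⟩
          · refine hch.prefix ?_
            refine ⟨rest', ?_⟩
            rw [hlsplit]; simp
          · intro k hk
            simp at hk
            rcases hk with rfl | hk | rfl
            · omega
            · have := (hp _).mp (List.mem_takeWhile_imp (hs ▸ hk))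
              omega
            · omega
          · intro k hk
            simp only [List.head?_cons, Option.some.injEq]
            constructor
            · intro hck
              simp at hk
              rcases hk with rfl | hk | rfl
              · rfl
              · have := (hp _).mp (List.mem_takeWhile_imp (hs ▸ hk))
                omega
              · omega
            · rintro rfl; omega
          · intro k hk
            have hgl : (x :: (s ++ [z])).getLast? = some z := by
              rw [show x :: (s ++ [z]) = (x :: s) ++ [z] by simp, List.getLast?_concat]
            rw [hgl]
            simp only [Option.some.injEq]
            constructor
            · intro hck
              simp at hk
              rcases hk with rfl | hk | rfl
              · omega
              · have := (hp _).mp (List.mem_takeWhile_imp (hs ▸ hk))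
                omega
              · rfl
            · rintro rfl; omega
        · -- hi ≤ c z : recurse on z :: rest'
          have hlen2 : (z :: rest').length ≤ N := by
            rw [hlsplit] at hlen; simp at hlen ⊢; omega
          have hy2 : (z :: rest').getLast? = some y := by
            rw [hlsplit] at hy
            rwa [getLast?_append_right' (by simp)] at hy
          obtain ⟨J, hJ1, hJ2, hJ3, hJ4, hJ5, hJ6⟩ :=
            ih (z :: rest') hlen2 hch2 z rfl hzhi y hy2 hylo
          refine ⟨J, hJ1.trans ?_, hJ2, hJ3, hJ4, hJ5, hJ6⟩
          exact List.IsSuffix.isInfix ⟨x :: s, hlsplit.symm⟩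

/-! ### The grid geometry -/

inductive Dir | E | N | W | S
deriving DecidableEq

instance : Fintype Dir := ⟨{Dir.E, Dir.N, Dir.W, Dir.S}, fun d => by cases d <;> simp⟩

open Dir

abbrev Cell := ℤ × ℤ
abbrev GEdge := Cell × Dir

def dvec : Dir → Cell
  | E => (1, 0) | N => (0, 1) | W => (-1, 0) | S => (0, -1)

def dlt : Dir → Dir
  | E => N | N => W | W => S | S => E

def drt : Dir → Dir
  | E => S | N => E | W => N | S => W

def cRoff : Dir → Cell
  | E => (1, 0) | N => (1, 1) | W => (0, 1) | S => (0, 0)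

def eR (e : GEdge) : Cell := e.1 + cRoff e.2
def eL (e : GEdge) : Cell := e.1 + cRoff e.2 + dvec (dlt e.2)
def tgt (e : GEdge) : Cell := e.1 + dvec e.2
def eFR (e : GEdge) : Cell := eR e + dvec e.2
def eFL (e : GEdge) : Cell := eL e + dvec e.2

def fstep (g : Cell → Bool) (e : GEdge) : GEdge :=
  if g (eFR e) = false then (tgt e, drt e.2)
  else if g (eFL e) = false then (tgt e, e.2)
  else (tgt e, dlt e.2)

def gstep (g : Cell → Bool) (e : GEdge) : GEdge :=
  if g (eR e - dvec e.2) = false then (e.1 - dvec (dlt e.2), dlt e.2)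
  else if g (eL e - dvec e.2) = false then (e.1 - dvec e.2, e.2)
  else (e.1 - dvec (drt e.2), drt e.2)

def GoodE (g : Cell → Bool) (e : GEdge) : Prop := g (eR e) = true ∧ g (eL e) = false

section identities

variable (a : Cell) (d : Dir)

lemma lt_rt : dlt (drt d) = d := by cases d <;> rfl
lemma rt_lt : drt (dlt d) = d := by cases d <;> rfl

lemma eR_rt : eR (a + dvec d, drt d) = eR (a, d) := by
  cases d <;> simp [eR, dvec, drt, cRoff, Prod.ext_iff]

lemma eL_rt : eL (a + dvec d, drt d) = eFR (a, d) := by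
  cases d <;> simp [eL, eFR, eR, dvec, drt, dlt, cRoff, Prod.ext_iff]

lemma eR_st : eR (a + dvec d, d) = eFR (a, d) := by
  cases d <;> simp [eR, eFR, dvec, cRoff, Prod.ext_iff] <;> ring

lemma eL_st : eL (a + dvec d, d) = eFL (a, d) := by
  cases d <;> simp [eL, eFL, eR, dvec, dlt, cRoff, Prod.ext_iff] <;> ring_nf <;> simp [add_comm]

lemma eR_lt : eR (a + dvec d, dlt d) = eFL (a, d) := by
  cases d <;> simp [eR, eFL, eL, dvec, dlt, cRoff, Prod.ext_iff] <;> ring_nf <;> simp [add_comm]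

lemma eL_lt : eL (a + dvec d, dlt d) = eL (a, d) := by
  cases d <;> simp [eL, eR, dvec, dlt, cRoff, Prod.ext_iff] <;> ring_nf <;> simp [add_comm]

lemma bR_rt : eR (a + dvec d, drt d) - dvec (drt d) = eL (a, d) := by
  cases d <;> simp [eR, eL, dvec, drt, dlt, cRoff, Prod.ext_iff] <;> ring_nf <;> simp [add_comm]

lemma bR_st : eR (a + dvec d, d) - dvec d = eR (a, d) := by
  cases d <;> simp [eR, dvec, cRoff, Prod.ext_iff] <;> ring

lemma bL_st : eL (a + dvec d, d) - dvec d = eL (a, d) := by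
  cases d <;> simp [eL, eR, dvec, dlt, cRoff, Prod.ext_iff] <;> ring_nf <;> simp [add_comm]

lemma bR_lt : eR (a + dvec d, dlt d) - dvec (dlt d) = eFR (a, d) := by
  cases d <;> simp [eR, eFR, dvec, dlt, cRoff, Prod.ext_iff] <;> ring_nf <;> simp [add_comm]

lemma bL_lt : eL (a + dvec d, dlt d) - dvec (dlt d) = eR (a, d) := by
  cases d <;> simp [eL, eR, dvec, dlt, cRoff, Prod.ext_iff] <;> ring_nf <;> simp [add_comm]

lemma star_turn : starAdj (eL (a, d)) (eFR (a, d)) := by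
  cases d <;> simp [starAdj, eL, eFR, eR, dvec, dlt, cRoff, abs, max_def] <;>
    split_ifs <;> omega

lemma star_straight : starAdj (eL (a, d)) (eFL (a, d)) := by
  cases d <;> simp [starAdj, eL, eFL, eR, dvec, dlt, cRoff, abs, max_def] <;>
    split_ifs <;> omega

lemma plus_straight : plusAdj (eR (a, d)) (eFR (a, d)) := by
  cases d <;> simp [plusAdj, eR, eFR, dvec, cRoff, abs] <;> split_ifs <;> omega

lemma plus_fr_fl : plusAdj (eFR (a, d)) (eFL (a, d)) := by
  cases d <;> simp [plusAdj, eFR, eFL, eR, eL, dvec, dlt, cRoff, abs] <;> split_ifs <;> omega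

end identities

lemma fstep_src (g : Cell → Bool) (e : GEdge) : (fstep g e).1 = tgt e := by
  unfold fstep; split_ifs <;> rfl

lemma goodE_fstep (g : Cell → Bool) (e : GEdge) (he : GoodE g e) : GoodE g (fstep g e) := by
  obtain ⟨a, d⟩ := e
  unfold fstep
  split_ifs with h1 h2
  · exact ⟨by rw [tgt]; rw [eR_rt]; exact he.1, by rw [tgt]; rw [eL_rt]; exact h1⟩
  · exact ⟨by rw [tgt]; rw [eR_st]; simpa using h1, by rw [tgt]; rw [eL_st]; exact h2⟩
  · exact ⟨by rw [tgt]; rw [eR_lt]; simpa using h2, by rw [tgt]; rw [eL_lt]; exact he.2⟩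

lemma gstep_fstep (g : Cell → Bool) (e : GEdge) (he : GoodE g e) : gstep g (fstep g e) = e := by
  obtain ⟨a, d⟩ := e
  unfold fstep
  split_ifs with h1 h2
  · simp only [tgt]
    unfold gstep
    rw [if_pos (by rw [bR_rt]; exact he.2), lt_rt]
    simp [add_sub_cancel_right]
  · simp only [tgt]
    unfold gstep
    rw [if_neg (by rw [bR_st, he.1]; simp), if_pos (by rw [bL_st]; exact he.2)]
    simp [add_sub_cancel_right]
  · simp only [tgt]
    unfold gstep
    rw [if_neg (by rw [bR_lt]; simp at h1 ⊢; exact h1), if_neg (by rw [bL_lt, he.1]; simp),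
      rt_lt]
    simp [add_sub_cancel_right]

lemma stepL (g : Cell → Bool) (e : GEdge) :
    eL (fstep g e) = eL e ∨ starAdj (eL e) (eL (fstep g e)) := by
  obtain ⟨a, d⟩ := e
  unfold fstep
  split_ifs with h1 h2
  · right; rw [tgt]; rw [eL_rt]; exact star_turn a d
  · right; rw [tgt]; rw [eL_st]; exact star_straight a d
  · left; rw [tgt]; rw [eL_lt]

lemma stepR (g : Cell → Bool) (e : GEdge) :
    eR (fstep g e) = eR e ∨
    (plusAdj (eR e) (eR (fstep g e))) ∨
    (plusAdj (eR e) (eFR e) ∧ plusAdj (eFR e) (eR (fstep g e)) ∧ g (eFR e) = true) := by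
  obtain ⟨a, d⟩ := e
  unfold fstep
  split_ifs with h1 h2
  · left; rw [tgt]; rw [eR_rt]
  · right; left; rw [tgt]; rw [eR_st]; exact plus_straight a d
  · right; right
    refine ⟨plus_straight a d, ?_, by simpa using h1⟩
    rw [tgt]; rw [eR_lt]; exact plus_fr_fl a d

/-! ### The extended colouring -/

def extC (m n : ℤ) (ω : Cell → Bool) (k : Cell) : Bool :=
  if 1 ≤ k.1 ∧ k.1 ≤ m ∧ 1 ≤ k.2 ∧ k.2 ≤ n then ω k
  else decide ((k.1 ≤ 0 ∧ k.2 ≤ n) ∨ (m + 1 ≤ k.1 ∧ 1 ≤ k.2))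

section extC

variable {m n : ℤ} {ω : Cell → Bool} (hm : 1 ≤ m) (hn : 1 ≤ n)

lemma extC_occ {k : Cell} (h : extC m n ω k = true) :
    (1 ≤ k.1 ∧ k.1 ≤ m ∧ 1 ≤ k.2 ∧ k.2 ≤ n ∧ ω k = true) ∨
    (k.1 ≤ 0 ∧ k.2 ≤ n) ∨ (m + 1 ≤ k.1 ∧ 1 ≤ k.2) := by
  unfold extC at h
  split_ifs at h with hr
  · exact Or.inl ⟨hr.1, hr.2.1, hr.2.2.1, hr.2.2.2, h⟩
  · right; simpa using h

lemma extC_vac {k : Cell} (h : extC m n ω k = false) :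
    (k.1 ≤ 0 → n + 1 ≤ k.2) ∧ (m + 1 ≤ k.1 → k.2 ≤ 0) ∧
    (1 ≤ k.1 → k.1 ≤ m → 1 ≤ k.2 → k.2 ≤ n → ω k = false) := by
  unfold extC at h
  split_ifs at h with hr
  · exact ⟨fun h1 => by omega, fun h1 => by omega, fun _ _ _ _ => h⟩
  · simp only [decide_eq_false_iff_not, not_or, not_and] at h
    push_neg at hr
    refine ⟨fun h1 => ?_, fun h1 => ?_, fun h1 h2 h3 h4 => absurd (hr h1 h2 h3) (by omega)⟩
    · have := h.1; omega
    · have := h.2; omega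

lemma extC_of_left {k : Cell} (h1 : k.1 ≤ 0) (h2 : k.2 ≤ n) : extC m n ω k = true := by
  unfold extC
  rw [if_neg (by omega)]
  simp; omega

lemma extC_of_right {k : Cell} (h1 : m + 1 ≤ k.1) (h2 : 1 ≤ k.2) : extC m n ω k = true := by
  unfold extC
  rw [if_neg (by omega)]
  simp; omega

lemma extC_false_top {k : Cell} (h1 : k.1 ≤ m) (h2 : n + 1 ≤ k.2) : extC m n ω k = false := by
  unfold extC
  rw [if_neg (by omega)]
  simp; omega

lemma extC_false_bottom {k : Cell} (h1 : 1 ≤ k.1) (h2 : k.2 ≤ 0) : extC m n ω k = false := by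
  unfold extC
  rw [if_neg (by omega)]
  simp; omega

lemma vac_mid {k : Cell} (h : extC m n ω k = false) (h1 : 1 ≤ k.2) (h2 : k.2 ≤ n) :
    1 ≤ k.1 ∧ k.1 ≤ m ∧ ω k = false := by
  obtain ⟨ha, hb, hc⟩ := extC_vac h
  have hx1 : 1 ≤ k.1 := by by_contra hx; push_neg at hx; have := ha (by omega); omega
  have hx2 : k.1 ≤ m := by by_contra hx; push_neg at hx; have := hb (by omega); omega
  exact ⟨hx1, hx2, hc hx1 hx2 h1 h2⟩

lemma occ_mid {k : Cell} (h : extC m n ω k = true) (h1 : 1 ≤ k.1) (h2 : k.1 ≤ m) :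
    1 ≤ k.2 ∧ k.2 ≤ n ∧ ω k = true := by
  rcases extC_occ h with ⟨_, _, h3, h4, h5⟩ | ⟨h3, _⟩ | ⟨h3, _⟩
  · exact ⟨h3, h4, h5⟩
  · omega
  · omega

end extC


lemma extC_occ' {m n : ℤ} {ω : Cell → Bool} {k : Cell} (h : extC m n ω k = true) :
    (1 ≤ k.1 ∧ k.1 ≤ m ∧ 1 ≤ k.2 ∧ k.2 ≤ n) ∨
    (k.1 ≤ 0 ∧ k.2 ≤ n) ∨ (m + 1 ≤ k.1 ∧ 1 ≤ k.2) := by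
  rcases extC_occ h with ⟨h1, h2, h3, h4, _⟩ | h' | h'
  · exact Or.inl ⟨h1, h2, h3, h4⟩
  · exact Or.inr (Or.inl h')
  · exact Or.inr (Or.inr h')

lemma extC_vac' {m n : ℤ} {ω : Cell → Bool} {k : Cell} (h : extC m n ω k = false) :
    (k.1 ≤ 0 → n + 1 ≤ k.2) ∧ (m + 1 ≤ k.1 → k.2 ≤ 0) :=
  ⟨(extC_vac h).1, (extC_vac h).2.1⟩

/-! ### gstep on boundary edges -/

section boundary

variable {m n : ℤ} {ω : Cell → Bool}

lemma gstep_fam1 (hm : 1 ≤ m) {x : ℤ} (hx : x ≤ 0) :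
    gstep (extC m n ω) ((x, n), Dir.E) = ((x - 1, n), Dir.E) := by
  have h1 : eR (((x, n) : Cell), Dir.E) - dvec Dir.E = (x, n) := by
    simp [eR, cRoff, dvec, Prod.ext_iff]
  have h2 : eL (((x, n) : Cell), Dir.E) - dvec Dir.E = (x, n + 1) := by
    simp [eL, cRoff, dvec, dlt, Prod.ext_iff]
  unfold gstep
  rw [h1, h2, if_neg (by rw [extC_of_left hx (le_refl n)]; simp),
    if_pos (extC_false_top (by omega) (by omega))]
  simp [dvec, Prod.ext_iff]

lemma gstep_fam2 (hm : 1 ≤ m) (hn : 1 ≤ n) {y : ℤ} (hy : y ≤ -1) :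
    gstep (extC m n ω) ((0, y), Dir.S) = ((0, y + 1), Dir.S) := by
  have h1 : eR ((((0 : ℤ), y) : Cell), Dir.S) - dvec Dir.S = (0, y + 1) := by
    simp [eR, cRoff, dvec, Prod.ext_iff]
  have h2 : eL ((((0 : ℤ), y) : Cell), Dir.S) - dvec Dir.S = (1, y + 1) := by
    simp [eL, cRoff, dvec, dlt, Prod.ext_iff]
  unfold gstep
  rw [h1, h2, if_neg (by rw [extC_of_left (le_refl 0) (by omega)]; simp),
    if_pos (extC_false_bottom (le_refl 1) (by omega))]
  simp [dvec, Prod.ext_iff]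

lemma gstep_fam3 (hm : 1 ≤ m) {x : ℤ} (hx : m ≤ x) :
    gstep (extC m n ω) ((x, 0), Dir.W) = ((x + 1, 0), Dir.W) := by
  have h1 : eR (((x, (0 : ℤ)) : Cell), Dir.W) - dvec Dir.W = (x + 1, 1) := by
    simp [eR, cRoff, dvec, Prod.ext_iff]
  have h2 : eL (((x, (0 : ℤ)) : Cell), Dir.W) - dvec Dir.W = (x + 1, 0) := by
    simp [eL, cRoff, dvec, dlt, Prod.ext_iff]
  unfold gstep
  rw [h1, h2, if_neg (by rw [extC_of_right (by omega) (le_refl 1)]; simp),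
    if_pos (extC_false_bottom (by omega) (le_refl 0))]
  simp [dvec, Prod.ext_iff]

lemma gstep_fam4 (hn : 1 ≤ n) {y : ℤ} (hy : n + 1 ≤ y) :
    gstep (extC m n ω) ((m, y), Dir.N) = ((m, y - 1), Dir.N) := by
  have h1 : eR (((m, y) : Cell), Dir.N) - dvec Dir.N = (m + 1, y) := by
    simp [eR, cRoff, dvec, Prod.ext_iff]
  have h2 : eL (((m, y) : Cell), Dir.N) - dvec Dir.N = (m, y) := by
    simp [eL, cRoff, dvec, dlt, Prod.ext_iff]
  unfold gstep
  rw [h1, h2, if_neg (by rw [extC_of_right (le_refl (m+1)) (by omega)]; simp),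
    if_pos (extC_false_top (le_refl m) hy)]
  simp [dvec, Prod.ext_iff]

lemma classify (hm : 1 ≤ m) (hn : 1 ≤ n) {e : GEdge} (he : GoodE (extC m n ω) e) :
    (-1 ≤ e.1.1 ∧ e.1.1 ≤ m + 1 ∧ -1 ≤ e.1.2 ∧ e.1.2 ≤ n + 1) ∨
    (e.2 = Dir.E ∧ e.1.2 = n ∧ e.1.1 ≤ -1) ∨ (e.2 = Dir.S ∧ e.1.1 = 0 ∧ e.1.2 ≤ 0) ∨
    (e.2 = Dir.W ∧ e.1.2 = 0 ∧ m + 2 ≤ e.1.1) ∨ (e.2 = Dir.N ∧ e.1.1 = m ∧ n ≤ e.1.2) := by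
  obtain ⟨⟨x, y⟩, d⟩ := e
  have hocc := extC_occ' he.1
  have hvac := extC_vac' he.2
  cases d <;> simp [eR, eL, cRoff, dvec, dlt] at hocc hvac <;> simp <;> omega

end boundary

/-! ### walks and traces -/

lemma goodE_iter (g : Cell → Bool) (e0 : GEdge) (h0 : GoodE g e0) (i : ℕ) :
    GoodE g ((fstep g)^[i] e0) := by
  induction i with
  | zero => exact h0
  | succ i ih => rw [Function.iterate_succ_apply']; exact goodE_fstep _ _ ih

lemma walk_descend (g : Cell → Bool) (e0 : GEdge) (h0 : GoodE g e0) {a b : ℕ}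
    (hab : (fstep g)^[a + 1] e0 = (fstep g)^[b + 1] e0) :
    (fstep g)^[a] e0 = (fstep g)^[b] e0 := by
  have h1 := gstep_fstep g _ (goodE_iter g e0 h0 a)
  have h2 := gstep_fstep g _ (goodE_iter g e0 h0 b)
  rw [Function.iterate_succ_apply'] at hab
  rw [Function.iterate_succ_apply'] at hab
  rw [← h1, ← h2, hab]

lemma walk_descend_all (g : Cell → Bool) (e0 : GEdge) (h0 : GoodE g e0) :
    ∀ (k a b : ℕ), (fstep g)^[a + k] e0 = (fstep g)^[b + k] e0 →
    (fstep g)^[a] e0 = (fstep g)^[b] e0 := by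
  intro k
  induction k with
  | zero => intro a b hab; simpa using hab
  | succ k ih =>
    intro a b hab
    refine ih a b (walk_descend g e0 h0 ?_)
    have e1 : a + (k + 1) = (a + k) + 1 := by omega
    have e2 : b + (k + 1) = (b + k) + 1 := by omega
    rw [e1, e2] at hab
    exact hab

lemma chain_append_one {r : Cell → Cell → Prop} {T : List Cell} {w z : Cell}
    (hT : T ≠ []) (hch : T.Chain' r) (hlast : T.getLast? = some w) (hrel : r w z) :
    (T ++ [z]).Chain' r ∧ (T ++ [z]).getLast? = some z ∧ (T ++ [z]).head? = T.head? := by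
  refine ⟨List.isChain_append.mpr ⟨hch, List.isChain_singleton _, ?_⟩, List.getLast?_concat,
    head?_append_left' hT⟩
  intro a ha b hb
  rw [hlast] at ha
  simp at ha hb
  subst ha; subst hb
  exact hrel

lemma traceL (g : Cell → Bool) (e0 : GEdge) (h0 : GoodE g e0) (i : ℕ) :
    ∃ T : List Cell, T ≠ [] ∧ T.head? = some (eL e0) ∧
      T.getLast? = some (eL ((fstep g)^[i] e0)) ∧
      T.Chain' (fun u v => u = v ∨ starAdj u v) ∧ ∀ k ∈ T, g k = false := by
  induction i with
  | zero => exact ⟨[eL e0], by simp, rfl, by simpa using rfl, List.isChain_singleton _, by simpa using h0.2⟩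
  | succ i ih =>
    obtain ⟨T, h1, h2, h3, h4, h5⟩ := ih
    have hnext : (fstep g)^[i + 1] e0 = fstep g ((fstep g)^[i] e0) :=
      Function.iterate_succ_apply' _ _ _
    rcases stepL g ((fstep g)^[i] e0) with heq | hstar
    · exact ⟨T, h1, h2, by rw [hnext, heq]; exact h3, h4, h5⟩
    · obtain ⟨hc1, hc2, hc3⟩ := chain_append_one h1 h4 h3 (Or.inr hstar)
      refine ⟨T ++ [eL (fstep g ((fstep g)^[i] e0))], by simp, by rw [hc3]; exact h2,
        by rw [hnext]; exact hc2, hc1, ?_⟩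
      intro k hk
      rcases List.mem_append.mp hk with hk | hk
      · exact h5 k hk
      · simp at hk; subst hk
        exact (goodE_fstep g _ (goodE_iter g e0 h0 i)).2

lemma traceR (g : Cell → Bool) (e0 : GEdge) (h0 : GoodE g e0) (i : ℕ) :
    ∃ T : List Cell, T ≠ [] ∧ T.head? = some (eR e0) ∧
      T.getLast? = some (eR ((fstep g)^[i] e0)) ∧
      T.Chain' (fun u v => u = v ∨ plusAdj u v) ∧ ∀ k ∈ T, g k = true := by
  induction i with
  | zero => exact ⟨[eR e0], by simp, rfl, by simpa using rfl, List.isChain_singleton _, by simpa using h0.1⟩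
  | succ i ih =>
    obtain ⟨T, h1, h2, h3, h4, h5⟩ := ih
    have hnext : (fstep g)^[i + 1] e0 = fstep g ((fstep g)^[i] e0) :=
      Function.iterate_succ_apply' _ _ _
    have hgnext : GoodE g (fstep g ((fstep g)^[i] e0)) :=
      goodE_fstep g _ (goodE_iter g e0 h0 i)
    rcases stepR g ((fstep g)^[i] e0) with heq | hplus | ⟨hp1, hp2, hp3⟩
    · exact ⟨T, h1, h2, by rw [hnext, heq]; exact h3, h4, h5⟩
    · obtain ⟨hc1, hc2, hc3⟩ := chain_append_one h1 h4 h3 (Or.inr hplus)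
      refine ⟨T ++ [eR (fstep g ((fstep g)^[i] e0))], by simp, by rw [hc3]; exact h2,
        by rw [hnext]; exact hc2, hc1, ?_⟩
      intro k hk
      rcases List.mem_append.mp hk with hk | hk
      · exact h5 k hk
      · simp at hk; subst hk; exact hgnext.1
    · obtain ⟨hc1, hc2, hc3⟩ := chain_append_one h1 h4 h3 (Or.inr hp1)
      obtain ⟨hd1, hd2, hd3⟩ := chain_append_one (by simp) hc1 hc2 (Or.inr hp2)
      refine ⟨(T ++ [eFR ((fstep g)^[i] e0)]) ++ [eR (fstep g ((fstep g)^[i] e0))],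
        by simp, by rw [hd3, hc3]; exact h2, by rw [hnext]; exact hd2, hd1, ?_⟩
      intro k hk
      rcases List.mem_append.mp hk with hk | hk
      · rcases List.mem_append.mp hk with hk | hk
        · exact h5 k hk
        · simp at hk; subst hk; exact hp3
      · simp at hk; subst hk; exact hgnext.1

/-- If `Λ` contains no occupied plus connected left-right crossing, then it contains
a vacant star connected top-down crossing. -/
theorem vacant_star_TD_of_no_occupied_plus_LR
    (m n : ℤ) (hm : 1 ≤ m) (hn : 1 ≤ n) (ω : ℤ × ℤ → Bool)
    (h : ¬ ∃ J : List (ℤ × ℤ), IsLRCrossing plusAdj m n J ∧ ∀ k ∈ J, ω k = true) :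
    ∃ J : List (ℤ × ℤ), IsTDCrossing starAdj m n J ∧ ∀ k ∈ J, ω k = false := by
  classical
  set g : Cell → Bool := extC m n ω with hg
  set e0 : GEdge := (((-1 : ℤ), n), Dir.E) with he0def
  have heRe0 : eR e0 = ((0 : ℤ), n) := by
    simp [he0def, eR, cRoff, Prod.ext_iff]
  have heLe0 : eL e0 = ((0 : ℤ), n + 1) := by
    simp [he0def, eL, eR, cRoff, dvec, dlt, Prod.ext_iff]
  have hGood0 : GoodE g e0 := by
    refine ⟨?_, ?_⟩
    · rw [heRe0]; exact extC_of_left (le_refl 0) (le_refl n)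
    · rw [heLe0]; exact extC_false_top (by omega) (le_refl (n + 1))
  set eA : GEdge := ((((0 : ℤ), (0 : ℤ)) : Cell), Dir.S) with heAdef
  set eB : GEdge := (((m, n) : Cell), Dir.N) with heBdef
  have hexit : ∃ i, (fstep g)^[i] e0 = eA ∨ (fstep g)^[i] e0 = eB := by
    by_contra hno
    push_neg at hno
    set Bad : GEdge → Prop := fun e =>
      (e.2 = Dir.E ∧ e.1.2 = n ∧ e.1.1 ≤ -1) ∨ (e.2 = Dir.S ∧ e.1.1 = 0 ∧ e.1.2 ≤ 0) ∨
      (e.2 = Dir.W ∧ e.1.2 = 0 ∧ m + 2 ≤ e.1.1) ∨ (e.2 = Dir.N ∧ e.1.1 = m ∧ n ≤ e.1.2)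
      with hBadDef
    have hstep_bad : ∀ i : ℕ, Bad ((fstep g)^[i + 1] e0) → Bad ((fstep g)^[i] e0) := by
      intro i hb
      have hgs : gstep g ((fstep g)^[i + 1] e0) = (fstep g)^[i] e0 := by
        rw [Function.iterate_succ_apply']
        exact gstep_fstep g _ (goodE_iter g e0 hGood0 i)
      rcases hb with ⟨hd, h2, h3⟩ | ⟨hd, h2, h3⟩ | ⟨hd, h2, h3⟩ | ⟨hd, h2, h3⟩
      · have he' : (fstep g)^[i + 1] e0 = ((((fstep g)^[i + 1] e0).1.1, n), Dir.E) :=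
          Prod.ext (Prod.ext rfl h2) hd
        have hfam := gstep_fam1 (n := n) (ω := ω) hm (x := ((fstep g)^[i + 1] e0).1.1)
          (by omega)
        rw [← hg] at hfam
        rw [he', hfam] at hgs
        rw [hBadDef, ← hgs]
        refine Or.inl ⟨rfl, rfl, ?_⟩
        show ((fstep g)^[i + 1] e0).1.1 - 1 ≤ -1
        omega
      · have hy : ((fstep g)^[i + 1] e0).1.2 ≤ -1 := by
          rcases eq_or_lt_of_le h3 with h0 | h0
          · exact absurd (Prod.ext (Prod.ext h2 h0) hd) (hno (i + 1)).1
          · omega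
        have he' : (fstep g)^[i + 1] e0 = (((0 : ℤ), ((fstep g)^[i + 1] e0).1.2), Dir.S) :=
          Prod.ext (Prod.ext h2 rfl) hd
        have hfam := gstep_fam2 (ω := ω) hm hn (y := ((fstep g)^[i + 1] e0).1.2) hy
        rw [← hg] at hfam
        rw [he', hfam] at hgs
        rw [hBadDef, ← hgs]
        refine Or.inr (Or.inl ⟨rfl, rfl, ?_⟩)
        show ((fstep g)^[i + 1] e0).1.2 + 1 ≤ 0
        omega
      · have he' : (fstep g)^[i + 1] e0 = ((((fstep g)^[i + 1] e0).1.1, (0 : ℤ)), Dir.W) :=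
          Prod.ext (Prod.ext rfl h2) hd
        have hfam := gstep_fam3 (n := n) (ω := ω) hm (x := ((fstep g)^[i + 1] e0).1.1)
          (by omega)
        rw [← hg] at hfam
        rw [he', hfam] at hgs
        rw [hBadDef, ← hgs]
        refine Or.inr (Or.inr (Or.inl ⟨rfl, rfl, ?_⟩))
        show m + 2 ≤ ((fstep g)^[i + 1] e0).1.1 + 1
        omega
      · have hy : n + 1 ≤ ((fstep g)^[i + 1] e0).1.2 := by
          rcases eq_or_lt_of_le h3 with h0 | h0
          · exact absurd (Prod.ext (Prod.ext h2 h0.symm) hd) (hno (i + 1)).2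
          · omega
        have he' : (fstep g)^[i + 1] e0 = ((m, ((fstep g)^[i + 1] e0).1.2), Dir.N) :=
          Prod.ext (Prod.ext h2 rfl) hd
        have hfam := gstep_fam4 (m := m) (ω := ω) hn (y := ((fstep g)^[i + 1] e0).1.2) hy
        rw [← hg] at hfam
        rw [he', hfam] at hgs
        rw [hBadDef, ← hgs]
        refine Or.inr (Or.inr (Or.inr ⟨rfl, rfl, ?_⟩))
        show n ≤ ((fstep g)^[i + 1] e0).1.2 - 1
        omega
    have hbase : ¬ Bad ((fstep g)^[0 + 1] e0) := by
      have hsrc : ((fstep g)^[0 + 1] e0).1 = ((0 : ℤ), n) := by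
        rw [show (fstep g)^[0 + 1] e0 = fstep g e0 from Function.iterate_one (fstep g) ▸ rfl]
        rw [fstep_src]
        simp [tgt, he0def, dvec, Prod.ext_iff]
      intro hb
      rw [hBadDef] at hb
      rcases hb with ⟨_, h2, h3⟩ | ⟨_, h2, h3⟩ | ⟨_, h2, h3⟩ | ⟨_, h2, h3⟩ <;>
        rw [hsrc] at h2 h3 <;> simp at h2 h3 <;> omega
    have hBadAll : ∀ i, ¬ Bad ((fstep g)^[i + 1] e0) := by
      intro i
      induction i with
      | zero => exact hbase
      | succ i ih => exact fun hb => ih (hstep_bad (i + 1) hb)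
    have hbox : ∀ i : ℕ,
        ((fstep g)^[i + 1] e0).1 ∈ Finset.Icc (((-1 : ℤ), (-1 : ℤ)) : Cell) ((m + 1, n + 1) : Cell) := by
      intro i
      rcases classify hm hn (hg ▸ goodE_iter g e0 hGood0 (i + 1)) with hin | hf | hf | hf | hf
      · rw [Finset.mem_Icc, Prod.le_def, Prod.le_def]
        constructor
        · exact ⟨hin.1, hin.2.2.1⟩
        · exact ⟨hin.2.1, hin.2.2.2⟩
      · exact absurd (by rw [hBadDef]; exact Or.inl hf) (hBadAll i)
      · exact absurd (by rw [hBadDef]; exact Or.inr (Or.inl hf)) (hBadAll i)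
      · exact absurd (by rw [hBadDef]; exact Or.inr (Or.inr (Or.inl hf))) (hBadAll i)
      · exact absurd (by rw [hBadDef]; exact Or.inr (Or.inr (Or.inr hf))) (hBadAll i)
    set F : Finset GEdge :=
      (Finset.Icc (((-1 : ℤ), (-1 : ℤ)) : Cell) ((m + 1, n + 1) : Cell)) ×ˢ
        (Finset.univ : Finset Dir) with hF
    have hmemF : ∀ i : ℕ, (fstep g)^[i + 1] e0 ∈ F := fun i =>
      Finset.mem_product.mpr ⟨hbox i, Finset.mem_univ _⟩
    obtain ⟨i, j, hij, hWij⟩ := Finite.exists_ne_map_eq_of_infinite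
      (fun i : ℕ => (⟨(fstep g)^[i + 1] e0, hmemF i⟩ : {e // e ∈ F}))
    have hW2 : (fstep g)^[i + 1] e0 = (fstep g)^[j + 1] e0 := congrArg Subtype.val hWij
    have key : ∀ i j : ℕ, i < j → (fstep g)^[i + 1] e0 = (fstep g)^[j + 1] e0 → False := by
      intro i j hlt heqw
      have h0j : (fstep g)^[0] e0 = (fstep g)^[j - i] e0 := by
        apply walk_descend_all g e0 hGood0 (i + 1) 0 (j - i)
        have ha : 0 + (i + 1) = i + 1 := by omega
        have hb2 : (j - i) + (i + 1) = j + 1 := by omega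
        rw [ha, hb2]
        exact heqw
      obtain ⟨t', ht'⟩ : ∃ t', j - i = t' + 1 := ⟨j - i - 1, by omega⟩
      have ht : (fstep g)^[t' + 1] e0 = e0 := by
        rw [← ht', ← h0j]
        simp
      have hgt' : (fstep g)^[t'] e0 = gstep g e0 := by
        have h5 : gstep g ((fstep g)^[t' + 1] e0) = (fstep g)^[t'] e0 := by
          rw [Function.iterate_succ_apply']
          exact gstep_fstep g _ (goodE_iter g e0 hGood0 t')
        rw [← h5, ht]
      have hge0 : gstep g e0 = (((-2 : ℤ), n), Dir.E) := by
        have hfam := gstep_fam1 (n := n) (ω := ω) hm (x := (-1 : ℤ)) (by omega)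
        rw [← hg] at hfam
        rw [he0def, hfam]
        norm_num
      cases t' with
      | zero =>
        have hcontr : e0 = (((-2 : ℤ), n), Dir.E) := by
          rw [← hge0, ← hgt']
          simp
        have h21 : (-1 : ℤ) = -2 := by
          rw [he0def] at hcontr
          exact congrArg (fun p : GEdge => p.1.1) hcontr
        omega
      | succ t'' =>
        apply hBadAll t''
        rw [hBadDef, hgt', hge0]
        exact Or.inl ⟨rfl, rfl, by norm_num⟩
    rcases lt_or_gt_of_ne hij with hlt | hlt
    · exact key i j hlt hW2
    · exact key j i hlt hW2.symm
  obtain ⟨i0, hA | hB⟩ := hexit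
  · -- exit at the bottom-left: the left cells give a vacant star TD crossing
    obtain ⟨T, hT1, hT2, hT3, hT4, hT5⟩ := traceL g e0 hGood0 i0
    rw [hA] at hT3
    have heLA : eL eA = (((1 : ℤ), (0 : ℤ)) : Cell) := by
      simp [heAdef, eL, eR, cRoff, dvec, dlt, Prod.ext_iff]
    rw [heLA] at hT3
    rw [heLe0] at hT2
    obtain ⟨T', hT'1, hT'2, hT'3, hT'4, hT'5, hT'6⟩ :=
      splice (fun u v => u = v ∨ starAdj u v) T.length T (le_refl _) hT1 hT4
    obtain ⟨J, hJinf, hJne, hJch, hJb, hJhead, hJlast⟩ :=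
      extract Prod.snd (fun u v => u = v ∨ starAdj u v)
        (by
          rintro a b (rfl | hs)
          · exact ⟨by omega, by omega⟩
          · have := starAdj_bound hs
            exact ⟨this.2.2.1, this.2.2.2⟩)
        1 n hn T'.length T' (le_refl _) hT'2 ((0 : ℤ), n + 1) (by rw [hT'4, hT2])
        (by norm_num) (((1 : ℤ), (0 : ℤ)) : Cell) (by rw [hT'5, hT3]) (by norm_num)
    have hJnd : J.Nodup := List.Nodup.sublist hJinf.sublist hT'3
    have hmemJ : ∀ k ∈ J, g k = false := fun k hk =>
      hT5 k (hT'6 k (hJinf.sublist.subset hk))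
    have hrect : ∀ k ∈ J, inRect m n k := by
      intro k hk
      obtain ⟨hb1, hb2⟩ := hJb k hk
      obtain ⟨hx1, hx2, _⟩ := vac_mid (hg ▸ hmemJ k hk) hb1 hb2
      exact ⟨hx1, hx2, hb1, hb2⟩
    refine ⟨J, ⟨hJne, hJnd, chain_drop_eq _ J hJch hJnd, hrect, hJhead, hJlast⟩, ?_⟩
    intro k hk
    obtain ⟨hb1, hb2⟩ := hJb k hk
    exact (vac_mid (hg ▸ hmemJ k hk) hb1 hb2).2.2
  · -- exit at the top-right: the right cells would give an occupied plus LR crossing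
    exfalso
    obtain ⟨T, hT1, hT2, hT3, hT4, hT5⟩ := traceR g e0 hGood0 i0
    rw [hB] at hT3
    have heRB : eR eB = ((m + 1, n + 1) : Cell) := by
      simp [heBdef, eR, cRoff, Prod.ext_iff]
    rw [heRB] at hT3
    rw [heRe0] at hT2
    obtain ⟨T', hT'1, hT'2, hT'3, hT'4, hT'5, hT'6⟩ :=
      splice (fun u v => u = v ∨ plusAdj u v) T.length T (le_refl _) hT1 hT4
    have hUne : T'.reverse ≠ [] := by
      simpa using hT'1
    have hUch : T'.reverse.Chain' (fun u v => u = v ∨ plusAdj u v) := by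
      unfold List.Chain'; rw [List.isChain_reverse]
      refine hT'2.imp ?_
      rintro a b (rfl | hp)
      · exact Or.inl rfl
      · exact Or.inr (plusAdj_symm hp)
    obtain ⟨J, hJinf, hJne, hJch, hJb, hJhead, hJlast⟩ :=
      extract Prod.fst (fun u v => u = v ∨ plusAdj u v)
        (by
          rintro a b (rfl | hp)
          · exact ⟨by omega, by omega⟩
          · have := plusAdj_bound hp
            exact ⟨this.1, this.2.1⟩)
        1 m hm T'.reverse.length T'.reverse (le_refl _) hUch ((m + 1, n + 1) : Cell)
        (by rw [List.head?_reverse, hT'5, hT3]) (by norm_num) (((0 : ℤ), n) : Cell)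
        (by rw [List.getLast?_reverse, hT'4, hT2]) (by norm_num)
    have hJnd : J.Nodup := List.Nodup.sublist hJinf.sublist (by simpa using hT'3)
    have hmemJ : ∀ k ∈ J, g k = true := by
      intro k hk
      have : k ∈ T'.reverse := hJinf.sublist.subset hk
      exact hT5 k (hT'6 k (by simpa using this))
    have hKch : J.reverse.Chain' plusAdj := by
      unfold List.Chain'; rw [List.isChain_reverse]
      refine (chain_drop_eq _ J hJch hJnd).imp ?_
      exact fun a b hp => plusAdj_symm hp
    have hrect : ∀ k ∈ J.reverse, inRect m n k := by
      intro k hk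
      rw [List.mem_reverse] at hk
      obtain ⟨hb1, hb2⟩ := hJb k hk
      obtain ⟨hy1, hy2, _⟩ := occ_mid (hg ▸ hmemJ k hk) hb1 hb2
      exact ⟨hb1, hb2, hy1, hy2⟩
    apply h
    refine ⟨J.reverse, ⟨by simpa using hJne, by simpa using hJnd, hKch, hrect, ?_, ?_⟩, ?_⟩
    · intro k hk
      rw [List.head?_reverse]
      rw [List.mem_reverse] at hk
      exact hJlast k hk
    · intro k hk
      rw [List.getLast?_reverse]
      rw [List.mem_reverse] at hk
      exact hJhead k hk
    · intro k hk
      rw [List.mem_reverse] at hk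
      obtain ⟨hb1, hb2⟩ := hJb k hk
      exact (occ_mid (hg ▸ hmemJ k hk) hb1 hb2).2.2
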